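/- For λ ∈ (0,1], the system λ(1−2a)/2 − (2λ+1)(1−2a)b = 0, λb/2 − (2λ+1)(a−b)²/2 = 0, λa/2 − (2λ+1)ab = 0, with constraints 0 < b < a < 1/2, has unique solution a_λ = (1+√2)λ/(4λ+2) and b_λ = λ/(4λ+2). -/

import Mathlib

theorem stmt_10 (lam a b : ℝ) (hlam : lam ∈ Set.Ioc (0:ℝ) 1)
    (hb : 0 < b) (hba : b < a) (ha : a < 1/2)
    (h1 : lam*(1 - 2*a)/2 - (2*lam + 1)*(1 - 2*a)*b = 0)
    (h2 : lam*b/2 - (2*lam + 1)*(a - b)^2/2 = 0)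
    (h3 : lam*a/2 - (2*lam + 1)*a*b = 0) :
    a = (1 + Real.sqrt 2)*lam/(4*lam + 2) ∧ b = lam/(4*lam + 2) := by
  obtain ⟨hl0, hl1⟩ := hlam
  have hL : (0:ℝ) < 4*lam + 2 := by linarith
  have ha0 : 0 < a := lt_trans hb hba
  have hfac : a * (lam - (4*lam + 2)*b) = 0 := by linear_combination 2 * h3
  have hbe : b = lam/(4*lam + 2) := by
    rcases mul_eq_zero.mp hfac with h | h
    · exact absurd h (ne_of_gt ha0)
    · field_simp; linarith
  subst hbe
  refine ⟨?_, rfl⟩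
  have s2 : Real.sqrt 2 ^ 2 = 2 := Real.sq_sqrt (by norm_num)
  have hs0 : (0:ℝ) < Real.sqrt 2 := Real.sqrt_pos.mpr (by norm_num)
  have key : (a*(4*lam + 2) - lam)^2 = 2*lam^2 := by
    have e : (4*lam + 2)^2 * ((a*(4*lam + 2) - lam)^2) = (4*lam + 2)^2 * (2*lam^2) := by
      field_simp at h2
      linear_combination -4*(2*lam+1)*h2
    exact mul_left_cancel₀ (ne_of_gt (by positivity : (0:ℝ) < (4*lam+2)^2)) e
  have key2 : (a*(4*lam + 2) - lam)^2 = (Real.sqrt 2 * lam)^2 := by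
    rw [mul_pow, s2]; linarith [key]
  have habs : |a*(4*lam + 2) - lam| = |Real.sqrt 2 * lam| := by
    rw [← Real.sqrt_sq_eq_abs, ← Real.sqrt_sq_eq_abs, key2]
  have hpos : 0 < a*(4*lam + 2) - lam := by
    have := (div_lt_iff₀ hL).mp hba
    linarith
  rw [abs_of_pos hpos, abs_of_pos (by positivity)] at habs
  field_simp
  linarith
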